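/- Let α ∈ [0,1) have dyadic expansion α = Σ_k 2^{-n_k}, where n_1 < n_2 < ... is the (finite or infinite) increasing sequence of positions of nonzero dyadic digits of α, and let O denote the set of odd natural numbers. Then the set B_α = ⋃_k 2^{n_k - 1} O is Buck measurable and μ(B_α) = Σ_k 2^{-n_k} = α. -/

import Mathlib

open scoped BigOperators

/-- Buck's measure density: the infimum of `∑ 1/mᵢ` over finite covers of `S`
by arithmetic progressions `{n | n ≡ rᵢ [MOD mᵢ]}`. -/
noncomputable def buckDensity (S : Set ℕ) : ℝ :=
  sInf {x : ℝ | ∃ (k : ℕ) (r m : Fin k → ℕ), (∀ i, 0 < m i) ∧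
    (S ⊆ ⋃ i, {n : ℕ | n ≡ r i [MOD m i]}) ∧ x = ∑ i, (1 : ℝ) / (m i)}

/-- A set is Buck measurable if `μ*(S) + μ*(ℕ \ S) = 1`. -/
def BuckMeasurable (S : Set ℕ) : Prop :=
  buckDensity S + buckDensity Sᶜ = 1

/-- `R(S : m)`: the number of residue classes modulo `m` occupied by `S`. -/
noncomputable def residueCount (S : Set ℕ) (m : ℕ) : ℕ :=
  ((fun s => s % m) '' S).ncard


-- helper: card of a residue class in range M
lemma filter_mod_card {M m a : ℕ} (hm : 0 < m) (ha : a < m) (hdvd : m ∣ M) :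
    ((Finset.range M).filter (fun n => n % m = a)).card = M / m := by
  have himg : (Finset.range M).filter (fun n => n % m = a)
      = (Finset.range (M / m)).image (fun j => j * m + a) := by
    ext x
    simp only [Finset.mem_filter, Finset.mem_range, Finset.mem_image]
    constructor
    · rintro ⟨hxM, hxa⟩
      refine ⟨x / m, ?_, ?_⟩
      · exact Nat.div_lt_div_of_lt_of_dvd hdvd hxM
      · have h1 := Nat.div_add_mod x m
        rw [Nat.mul_comm] at h1
        omega
    · rintro ⟨j, hj, rfl⟩
      constructor
      · calc j * m + a < j * m + m := by omega
          _ = (j + 1) * m := by ring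
          _ ≤ (M / m) * m := Nat.mul_le_mul_right m hj
          _ = M := Nat.div_mul_cancel hdvd
      · rw [Nat.add_comm, Nat.add_mul_mod_self_right, Nat.mod_eq_of_lt ha]
  rw [himg, Finset.card_image_of_injective _ (fun x y h => Nat.eq_of_mul_eq_mul_right hm (by omega)), Finset.card_range]

-- a finite cover of ℕ by APs has total density at least 1
lemma cover_sum_ge_one {k : ℕ} (r m : Fin k → ℕ) (hm : ∀ i, 0 < m i)
    (hcov : ∀ n : ℕ, ∃ i, n ≡ r i [MOD m i]) : (1 : ℝ) ≤ ∑ i, (1 : ℝ) / (m i) := by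
  classical
  set M : ℕ := ∏ i, m i with hM
  have hMpos : 0 < M := Finset.prod_pos (fun i _ => hm i)
  have hdvd : ∀ i, m i ∣ M := fun i => Finset.dvd_prod_of_mem m (Finset.mem_univ i)
  have hsub : Finset.range M ⊆
      Finset.univ.biUnion (fun i : Fin k =>
        (Finset.range M).filter (fun n => n % m i = r i % m i)) := by
    intro n hn
    obtain ⟨i, hi⟩ := hcov n
    exact Finset.mem_biUnion.2 ⟨i, Finset.mem_univ i, Finset.mem_filter.2 ⟨hn, hi⟩⟩
  have hcard : M ≤ ∑ i, ((Finset.range M).filter (fun n => n % m i = r i % m i)).card := by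
    calc M = (Finset.range M).card := (Finset.card_range M).symm
      _ ≤ (Finset.univ.biUnion (fun i : Fin k =>
            (Finset.range M).filter (fun n => n % m i = r i % m i))).card :=
          Finset.card_le_card hsub
      _ ≤ ∑ i, ((Finset.range M).filter (fun n => n % m i = r i % m i)).card :=
          Finset.card_biUnion_le
  have hcard' : M ≤ ∑ i, M / m i := by
    refine hcard.trans (le_of_eq (Finset.sum_congr rfl fun i _ => ?_))
    exact filter_mod_card (hm i) (Nat.mod_lt _ (hm i)) (hdvd i)
  have hre : (M : ℝ) ≤ ∑ i, (M : ℝ) / (m i) := by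
    calc (M : ℝ) ≤ ((∑ i, M / m i : ℕ) : ℝ) := by exact_mod_cast hcard'
      _ = ∑ i, (M : ℝ) / (m i) := by
          push_cast
          exact Finset.sum_congr rfl fun i _ => Nat.cast_div (hdvd i)
            (by exact_mod_cast (hm i).ne')
  have hMne : (M : ℝ) ≠ 0 := by exact_mod_cast hMpos.ne'
  have : (M : ℝ) ≤ (M : ℝ) * ∑ i, (1 : ℝ) / (m i) := by
    rw [Finset.mul_sum]
    simpa [div_eq_mul_inv] using hre
  have hMpos' : (0:ℝ) < M := by exact_mod_cast hMpos
  have h2 : (M:ℝ) * 1 ≤ (M:ℝ) * ∑ i, (1 : ℝ) / (m i) := by simpa using this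
  exact (mul_le_mul_iff_right₀ hMpos').mp h2


def coverSet (S : Set ℕ) : Set ℝ :=
  {x : ℝ | ∃ (k : ℕ) (r m : Fin k → ℕ), (∀ i, 0 < m i) ∧
    (S ⊆ ⋃ i, {n : ℕ | n ≡ r i [MOD m i]}) ∧ x = ∑ i, (1 : ℝ) / (m i)}

lemma one_mem_coverSet (S : Set ℕ) : (1 : ℝ) ∈ coverSet S := by
  refine ⟨1, fun _ => 0, fun _ => 1, fun _ => one_pos, ?_, by simp⟩
  intro n _
  exact Set.mem_iUnion.2 ⟨0, Nat.modEq_one⟩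

lemma coverSet_bddBelow (S : Set ℕ) : BddBelow (coverSet S) := by
  refine ⟨0, fun x hx => ?_⟩
  obtain ⟨k, r, m, hm, -, rfl⟩ := hx
  positivity

lemma coverSet_pair {S : Set ℕ} {x y : ℝ} (hx : x ∈ coverSet S) (hy : y ∈ coverSet Sᶜ) :
    (1 : ℝ) ≤ x + y := by
  obtain ⟨k₁, r₁, m₁, hm₁, hc₁, rfl⟩ := hx
  obtain ⟨k₂, r₂, m₂, hm₂, hc₂, rfl⟩ := hy
  have key := cover_sum_ge_one (Fin.addCases r₁ r₂) (Fin.addCases m₁ m₂)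
    (fun i => by refine Fin.addCases (fun j => ?_) (fun j => ?_) i <;> simp [hm₁, hm₂])
    (fun n => ?_)
  · rw [Fin.sum_univ_add] at key
    simpa using key
  · by_cases hn : n ∈ S
    · obtain ⟨j, hj⟩ := Set.mem_iUnion.1 (hc₁ hn)
      exact ⟨Fin.castAdd k₂ j, by simpa using hj⟩
    · obtain ⟨j, hj⟩ := Set.mem_iUnion.1 (hc₂ hn)
      exact ⟨Fin.natAdd k₁ j, by simpa using hj⟩


lemma ap_iff {k n : ℕ} (hk : 1 ≤ k) :
    n % 2 ^ k = 2 ^ (k - 1) ↔ ∃ m, Odd m ∧ 2 ^ (k - 1) * m = n := by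
  have hpow : 2 ^ k = 2 ^ (k - 1) * 2 := by
    conv_lhs => rw [show k = (k - 1) + 1 by omega, pow_succ]
  have hlt : 2 ^ (k - 1) < 2 ^ k := Nat.pow_lt_pow_right one_lt_two (by omega)
  constructor
  · intro h
    refine ⟨2 * (n / 2 ^ k) + 1, ⟨n / 2 ^ k, by ring⟩, ?_⟩
    have := Nat.div_add_mod n (2 ^ k)
    rw [h] at this
    rw [mul_add, mul_one, ← mul_assoc, mul_comm (2 ^ (k-1)) 2, mul_comm 2 (2^(k-1))]
    nlinarith [this, hpow]
  · rintro ⟨m, ⟨q, rfl⟩, rfl⟩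
    have : 2 ^ (k - 1) * (2 * q + 1) = 2 ^ k * q + 2 ^ (k - 1) := by rw [hpow]; ring
    rw [this, Nat.mul_add_mod, Nat.mod_eq_of_lt hlt]

lemma geom_Ico (N : ℕ) (hN : 1 ≤ N) :
    ∑ k ∈ Finset.Ico 1 N, (1 : ℝ) / 2 ^ k = 1 - 1 / 2 ^ (N - 1) := by
  induction N with
  | zero => omega
  | succ n ih =>
    rcases Nat.eq_or_lt_of_le hN with h | h
    · simp [← h]
    · have hn : 1 ≤ n := by omega
      rw [Finset.sum_Ico_succ_top hn, ih hn]
      have : n - 1 + 1 = n := by omega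
      rw [show n + 1 - 1 = n from rfl, ← this, pow_succ]
      field_simp
      rw [show n - 1 + 1 - 1 = n - 1 from by omega]
      ring

lemma buckDensity_eq (S : Set ℕ) : buckDensity S = sInf (coverSet S) := rfl

lemma cover_bound (T : Set ℕ) (F : Finset ℕ) (hF : ∀ k ∈ F, 1 ≤ k) (N : ℕ)
    (hcov : ∀ n ∈ T, (∃ k ∈ F, n % 2 ^ k = 2 ^ (k - 1)) ∨ 2 ^ N ∣ n) :
    buckDensity T ≤ ∑ k ∈ F, (1 : ℝ) / 2 ^ k + 1 / 2 ^ N := by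
  classical
  set e : Fin F.card ↪o ℕ := F.orderEmbOfFin rfl with he
  have hmem : (∑ k ∈ F, (1 : ℝ) / 2 ^ k + 1 / 2 ^ N) ∈ coverSet T := by
    refine ⟨F.card + 1, Fin.snoc (fun i => 2 ^ (e i - 1)) 0,
      Fin.snoc (fun i => 2 ^ (e i)) (2 ^ N), ?_, ?_, ?_⟩
    · intro i
      induction i using Fin.lastCases with
      | last => simp
      | cast i => simp only [Fin.snoc_castSucc]; positivity
    · intro n hn
      rcases hcov n hn with ⟨k, hkF, hk⟩ | hdvd
      · obtain ⟨i, hi⟩ : ∃ i, e i = k := by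
          have : k ∈ Set.range e := by rw [he, Finset.range_orderEmbOfFin]; exact hkF
          exact this
        refine Set.mem_iUnion.2 ⟨Fin.castSucc i, ?_⟩
        have hk1 : 1 ≤ k := hF k hkF
        have hlt : 2 ^ (k - 1) < 2 ^ k := Nat.pow_lt_pow_right one_lt_two (by omega)
        show n ≡ _ [MOD _]
        simp only [Fin.snoc_castSucc, hi]
        show n % 2 ^ k = 2 ^ (k - 1) % 2 ^ k
        rw [hk, Nat.mod_eq_of_lt hlt]
      · refine Set.mem_iUnion.2 ⟨Fin.last _, ?_⟩
        show n ≡ _ [MOD _]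
        simp only [Fin.snoc_last]
        exact (Nat.modEq_zero_iff_dvd).2 hdvd
    · rw [Fin.sum_univ_castSucc]
      simp only [Fin.snoc_castSucc, Fin.snoc_last]
      congr 1
      · push_cast
        refine (Finset.sum_bij (fun i _ => e i) (fun i _ => F.orderEmbOfFin_mem rfl i)
          (fun i _ j _ h => e.injective h) (fun k hk => ?_) (fun i _ => rfl)).symm
        · have : k ∈ Set.range e := by rw [he, Finset.range_orderEmbOfFin]; exact hk
          obtain ⟨i, hi⟩ := this
          exact ⟨i, Finset.mem_univ i, hi⟩
      · push_cast
        rfl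
  rw [buckDensity_eq]
  exact csInf_le (coverSet_bddBelow T) hmem

lemma one_le_buck (S : Set ℕ) : 1 ≤ buckDensity S + buckDensity Sᶜ := by
  rw [buckDensity_eq, buckDensity_eq]
  have hne : (coverSet Sᶜ).Nonempty := ⟨1, one_mem_coverSet _⟩
  have h1 : ∀ x ∈ coverSet S, 1 - sInf (coverSet Sᶜ) ≤ x := by
    intro x hx
    have : 1 - x ≤ sInf (coverSet Sᶜ) :=
      le_csInf hne fun y hy => by linarith [coverSet_pair hx hy]
    linarith
  have := le_csInf ⟨1, one_mem_coverSet S⟩ h1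
  linarith

theorem stmt_3 (α : ℝ) (hα : α ∈ Set.Ico (0 : ℝ) 1)
    (E : Set ℕ) (hE : ∀ k ∈ E, 1 ≤ k)
    (hsum : HasSum (fun k : E => (1 : ℝ) / 2 ^ (k : ℕ)) α) :
    BuckMeasurable (⋃ k ∈ E, (fun m => 2 ^ (k - 1) * m) '' {n : ℕ | Odd n}) ∧
      buckDensity (⋃ k ∈ E, (fun m => 2 ^ (k - 1) * m) '' {n : ℕ | Odd n}) = α := by
  classical
  obtain ⟨hα0, hα1⟩ := hα
  set S : Set ℕ := ⋃ k ∈ E, (fun m => 2 ^ (k - 1) * m) '' {n : ℕ | Odd n} with hSdef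
  set g : ℕ → ℝ := Set.indicator E (fun k => (1 : ℝ) / 2 ^ k) with hgdef
  have hgsum : HasSum g α := by
    rw [hgdef]
    exact (hasSum_subtype_iff_indicator (f := fun k : ℕ => (1 : ℝ) / 2 ^ k)).mp hsum
  have hg0 : ∀ k, 0 ≤ g k := fun k => Set.indicator_nonneg (fun _ _ => by positivity) _
  have hmemS : ∀ n, n ∈ S ↔ ∃ k ∈ E, n % 2 ^ k = 2 ^ (k - 1) := by
    intro n
    simp only [hSdef, Set.mem_iUnion, Set.mem_image, Set.mem_setOf_eq]
    constructor
    · rintro ⟨k, hk, m, hm, rfl⟩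
      exact ⟨k, hk, (ap_iff (hE k hk)).2 ⟨m, hm, rfl⟩⟩
    · rintro ⟨k, hk, h⟩
      obtain ⟨m, hm, hn⟩ := (ap_iff (hE k hk)).1 h
      exact ⟨k, hk, m, hm, hn⟩
  have hubS : buckDensity S ≤ α := by
    refine le_of_forall_pos_le_add (fun ε hε => ?_)
    obtain ⟨j, hj⟩ : ∃ j : ℕ, (1 : ℝ) / 2 ^ j < ε := by
      obtain ⟨j, hj⟩ := exists_pow_lt_of_lt_one hε (by norm_num : (1 : ℝ) / 2 < 1)
      exact ⟨j, by rwa [div_pow, one_pow] at hj⟩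
    set F : Finset ℕ := (Finset.Ico 1 (j + 1)).filter (· ∈ E) with hF
    have hcov : ∀ n ∈ S, (∃ k ∈ F, n % 2 ^ k = 2 ^ (k - 1)) ∨ 2 ^ j ∣ n := by
      intro n hn
      obtain ⟨k, hkE, hk⟩ := (hmemS n).1 hn
      by_cases hkj : k < j + 1
      · exact Or.inl ⟨k, Finset.mem_filter.2 ⟨Finset.mem_Ico.2 ⟨hE k hkE, hkj⟩, hkE⟩, hk⟩
      · right
        obtain ⟨m, hm, rfl⟩ := (ap_iff (hE k hkE)).1 hk
        exact Dvd.dvd.mul_right (pow_dvd_pow 2 (by omega)) m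
    have hb := cover_bound S F
      (fun k hk => (Finset.mem_Ico.1 (Finset.mem_filter.1 hk).1).1) j hcov
    have hFsum : ∑ k ∈ F, (1 : ℝ) / 2 ^ k ≤ α := by
      have heq : ∑ k ∈ F, (1 : ℝ) / 2 ^ k = ∑ k ∈ F, g k :=
        Finset.sum_congr rfl fun k hk => by
          rw [hgdef]
          exact (Set.indicator_of_mem (Finset.mem_filter.1 hk).2
            (fun k => (1 : ℝ) / 2 ^ k)).symm
      rw [heq]
      exact sum_le_hasSum F (fun k _ => hg0 k) hgsum
    calc buckDensity S ≤ ∑ k ∈ F, (1 : ℝ) / 2 ^ k + 1 / 2 ^ j := hb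
      _ ≤ α + ε := add_le_add hFsum hj.le
  have hubC : buckDensity Sᶜ ≤ 1 - α := by
    refine le_of_forall_pos_le_add (fun ε hε => ?_)
    obtain ⟨N, hN1, hNsum⟩ : ∃ N, 1 ≤ N ∧ α - ε < ∑ k ∈ Finset.range N, g k := by
      have ht := hgsum.tendsto_sum_nat
      have h' := ht.eventually (eventually_gt_nhds (by linarith : α - ε < α))
      obtain ⟨N, hN⟩ := (h'.and (Filter.eventually_ge_atTop 1)).exists
      exact ⟨N, hN.2, hN.1⟩
    set F : Finset ℕ := (Finset.Ico 1 N).filter (· ∉ E) with hF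
    have hcov : ∀ n ∈ Sᶜ, (∃ k ∈ F, n % 2 ^ k = 2 ^ (k - 1)) ∨ 2 ^ (N - 1) ∣ n := by
      intro n hn
      rcases Nat.eq_zero_or_pos n with rfl | hn0
      · exact Or.inr (dvd_zero _)
      · set v := n.factorization 2 with hv
        have hodd : Odd (n / 2 ^ v) := by
          rw [Nat.odd_iff]
          have h2 := Nat.not_dvd_ordCompl Nat.prime_two hn0.ne'
          rw [← hv] at h2
          omega
        have hfac : 2 ^ v * (n / 2 ^ v) = n := Nat.ordProj_mul_ordCompl_eq_self n 2
        have hkE : (v + 1) ∉ E := by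
          intro hmem
          exact hn ((hmemS n).2 ⟨v + 1, hmem, (ap_iff (by omega)).2
            ⟨n / 2 ^ v, hodd, by simpa using hfac⟩⟩)
        by_cases hvN : v + 1 < N
        · exact Or.inl ⟨v + 1, Finset.mem_filter.2 ⟨Finset.mem_Ico.2 ⟨by omega, hvN⟩, hkE⟩,
            (ap_iff (by omega)).2 ⟨n / 2 ^ v, hodd, by simpa using hfac⟩⟩
        · exact Or.inr (dvd_trans (pow_dvd_pow 2 (by omega)) (Nat.ordProj_dvd n 2))
    have hb := cover_bound Sᶜ F
      (fun k hk => (Finset.mem_Ico.1 (Finset.mem_filter.1 hk).1).1) (N - 1) hcov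
    have hsplit : ∑ k ∈ F, (1 : ℝ) / 2 ^ k
        = (1 - 1 / 2 ^ (N - 1)) - ∑ k ∈ Finset.range N, g k := by
      have h1 : ∑ k ∈ (Finset.Ico 1 N).filter (· ∈ E), (1 : ℝ) / 2 ^ k
            + ∑ k ∈ (Finset.Ico 1 N).filter (· ∉ E), (1 : ℝ) / 2 ^ k
          = ∑ k ∈ Finset.Ico 1 N, (1 : ℝ) / 2 ^ k :=
        Finset.sum_filter_add_sum_filter_not _ _ _
      have h2 : ∑ k ∈ Finset.range N, g k
          = ∑ k ∈ (Finset.Ico 1 N).filter (· ∈ E), (1 : ℝ) / 2 ^ k := by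
        rw [hgdef, Finset.sum_indicator_eq_sum_filter]
        congr 1
        ext k
        simp only [Finset.mem_filter, Finset.mem_range, Finset.mem_Ico]
        constructor
        · rintro ⟨h, hkE⟩; exact ⟨⟨hE k hkE, h⟩, hkE⟩
        · rintro ⟨⟨hk1, hk2⟩, hkE⟩; exact ⟨hk2, hkE⟩
      rw [geom_Ico N hN1] at h1
      rw [h2]
      rw [hF] at *
      linarith
    calc buckDensity Sᶜ ≤ ∑ k ∈ F, (1 : ℝ) / 2 ^ k + 1 / 2 ^ (N - 1) := hb
      _ = 1 - ∑ k ∈ Finset.range N, g k := by rw [hsplit]; ring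
      _ ≤ 1 - α + ε := by linarith
  have hlow : 1 ≤ buckDensity S + buckDensity Sᶜ := one_le_buck S
  constructor
  · unfold BuckMeasurable
    linarith
  · linarith
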